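/- The arcsinh-system polynomials p_n(x) with EGF exp(x·sinh v) satisfy p_n(x) = Σ_{j=0}^{n} C(n,j) (−1)^j T_{n−j}(x/2) T_j(−x/2), where T_m are Touchard polynomials. -/

import Mathlib

set_option linter.unusedSectionVars false
set_option maxHeartbeats 1000000

open PowerSeries Finset

/-- Formal exponential `exp(f) = Σ_k f^k/k!` of a power series `f` with zero constant
term, over a `ℚ`-algebra. -/
noncomputable def expPS {A : Type*} [CommRing A] [Algebra ℚ A] (f : PowerSeries A) :
    PowerSeries A :=
  PowerSeries.mk fun n =>
    ∑ k ∈ Finset.range (n + 1), (k.factorial : ℚ)⁻¹ • PowerSeries.coeff (R := A) n (f ^ k)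

/-- Stirling numbers of the second kind. -/
def stirlingSecond : ℕ → ℕ → ℚ
  | 0, 0 => 1
  | 0, _ + 1 => 0
  | _ + 1, 0 => 0
  | n + 1, k + 1 => stirlingSecond n k + (k + 1) * stirlingSecond n (k + 1)

/-- The Touchard polynomial `T_m(y) = Σ_k S(m,k) y^k`. -/
noncomputable def touchard (m : ℕ) : Polynomial ℚ :=
  ∑ k ∈ Finset.range (m + 1), Polynomial.C (stirlingSecond m k) * Polynomial.X ^ k

/-- The formal power series `x sinh v = x Σ_{m odd} v^m/m!` over `ℚ[x]`. -/
noncomputable def xSinh : PowerSeries (Polynomial ℚ) :=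
  PowerSeries.C (R := Polynomial ℚ) Polynomial.X *
    PowerSeries.mk fun m => if Odd m then Polynomial.C ((m.factorial : ℚ)⁻¹) else 0

/-- The arcsinh-system polynomial `p_n(x) = n! [v^n] exp(x sinh v)`. -/
noncomputable def arcsinhP (n : ℕ) : Polynomial ℚ :=
  (n.factorial : ℚ) • PowerSeries.coeff (R := Polynomial ℚ) n (expPS xSinh)

section Aux

/-- `e^v - 1` as a power series over ℚ. -/
noncomputable def Eexp : PowerSeries ℚ :=
  PowerSeries.mk fun m => if m = 0 then 0 else (m.factorial : ℚ)⁻¹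

lemma constantCoeff_Eexp : constantCoeff (R := ℚ) Eexp = 0 := by
  simp [Eexp, ← coeff_zero_eq_constantCoeff_apply]

lemma derivative_Eexp : PowerSeries.derivative ℚ Eexp = Eexp + 1 := by
  ext n
  rw [PowerSeries.coeff_derivative]
  simp only [Eexp, coeff_mk, map_add, coeff_one]
  rcases Nat.eq_zero_or_pos n with h | h
  · subst h; norm_num
  · have hn : n ≠ 0 := h.ne'
    simp only [if_neg (Nat.succ_ne_zero n), if_neg hn, hn, if_false]
    rw [Nat.factorial_succ]
    have h1 : ((n + 1 : ℕ) : ℚ) ≠ 0 := by positivity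
    have h2 : ((n.factorial : ℚ)) ≠ 0 := by positivity
    push_cast
    field_simp
    simp

lemma coeff_Eexp_pow (n k : ℕ) :
    PowerSeries.coeff (R := ℚ) n (Eexp ^ k) =
      stirlingSecond n k * k.factorial / n.factorial := by
  induction n generalizing k with
  | zero =>
    rw [coeff_zero_eq_constantCoeff, map_pow, constantCoeff_Eexp]
    cases k with
    | zero => simp [stirlingSecond]
    | succ k => simp [stirlingSecond]
  | succ n ih =>
    cases k with
    | zero => simp [stirlingSecond, pow_zero, PowerSeries.coeff_one]
    | succ k =>
      have hder : PowerSeries.derivative ℚ (Eexp ^ (k+1))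
          = (k+1 : ℕ) • ((Eexp ^ (k+1)) + Eexp ^ k) := by
        rw [Derivation.leibniz_pow, derivative_Eexp]
        rw [Nat.add_sub_cancel, smul_eq_mul, mul_add, mul_one, ← pow_succ]
      have := congrArg (PowerSeries.coeff (R := ℚ) n) hder
      rw [PowerSeries.coeff_derivative, map_nsmul, map_add, ih, ih] at this
      have hfac : ((n.factorial : ℚ)) ≠ 0 := by positivity
      have hn1 : ((n + 1 : ℕ) : ℚ) ≠ 0 := by positivity
      have hrec : stirlingSecond (n+1) (k+1)
          = stirlingSecond n k + (k + 1) * stirlingSecond n (k+1) := rfl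
      have key : PowerSeries.coeff (R := ℚ) (n+1) (Eexp ^ (k+1)) * (n+1)
          = (k+1 : ℚ) * (stirlingSecond n (k+1) * (k+1).factorial / n.factorial
            + stirlingSecond n k * k.factorial / n.factorial) := by
        rw [this]; push_cast [nsmul_eq_mul]; ring
      have : PowerSeries.coeff (R := ℚ) (n+1) (Eexp ^ (k+1))
          = (k+1 : ℚ) * (stirlingSecond n (k+1) * (k+1).factorial / n.factorial
            + stirlingSecond n k * k.factorial / n.factorial) / (n+1) := by
        field_simp at key ⊢
        linarith [key]
      rw [this, hrec, Nat.factorial_succ (n), Nat.factorial_succ k]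
      push_cast
      field_simp
      ring

variable {A : Type*} [CommRing A] [Algebra ℚ A]


lemma coeff_pow_eq_zero' {f : PowerSeries A} (hf : constantCoeff (R := A) f = 0)
    {n k : ℕ} (h : n < k) : PowerSeries.coeff (R := A) n (f ^ k) = 0 := by
  have : (X : PowerSeries A) ^ k ∣ f ^ k :=
    pow_dvd_pow_of_dvd (PowerSeries.X_dvd_iff.mpr hf) k
  exact PowerSeries.X_pow_dvd_iff.mp this n h

lemma coeff_mul_pow_eq_zero {f g : PowerSeries A} (hf : constantCoeff (R := A) f = 0)
    (hg : constantCoeff (R := A) g = 0) {n k l : ℕ} (h : n < k + l) :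
    PowerSeries.coeff (R := A) n (f ^ k * g ^ l) = 0 := by
  have : (X : PowerSeries A) ^ (k + l) ∣ f ^ k * g ^ l := by
    rw [pow_add]
    exact mul_dvd_mul (pow_dvd_pow_of_dvd (PowerSeries.X_dvd_iff.mpr hf) k)
      (pow_dvd_pow_of_dvd (PowerSeries.X_dvd_iff.mpr hg) l)
  exact PowerSeries.X_pow_dvd_iff.mp this n h

lemma triangle_sq {M : Type*} [AddCommMonoid M] (n : ℕ) (c : ℕ → ℕ → M)
    (hc : ∀ k l, n < k + l → c k l = 0) :
    ∑ m ∈ range (n+1), ∑ p ∈ antidiagonal m, c p.1 p.2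
      = ∑ k ∈ range (n+1), ∑ l ∈ range (n+1), c k l := by
  have hdisj : (↑(range (n+1)) : Set ℕ).PairwiseDisjoint
      (fun m => (antidiagonal m : Finset (ℕ × ℕ))) := by
    intro a _ b _ hab
    simp only [Finset.disjoint_left]
    intro p hpa hpb
    rw [Finset.HasAntidiagonal.mem_antidiagonal] at hpa hpb
    exact hab (hpa ▸ hpb ▸ rfl)
  rw [← Finset.sum_biUnion hdisj]
  rw [← Finset.sum_product']
  have hset : (range (n+1)).biUnion (fun m => antidiagonal m)
      = (range (n+1) ×ˢ range (n+1)).filter (fun p => p.1 + p.2 ≤ n) := by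
    ext ⟨k, l⟩
    simp only [Finset.mem_biUnion, Finset.mem_filter, Finset.mem_product,
      Finset.mem_range, Finset.HasAntidiagonal.mem_antidiagonal, Nat.lt_succ_iff]
    constructor
    · rintro ⟨m, hm, hkl⟩; omega
    · rintro ⟨⟨hk, hl⟩, hkl⟩; exact ⟨k + l, hkl, rfl⟩
  rw [hset]
  exact Finset.sum_filter_of_ne fun p hp hne => by
    by_contra h
    exact hne (hc p.1 p.2 (by omega))

lemma expPS_add {f g : PowerSeries A} (hf : constantCoeff (R := A) f = 0)
    (hg : constantCoeff (R := A) g = 0) : expPS (f + g) = expPS f * expPS g := by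
  ext n
  rw [PowerSeries.coeff_mul]
  -- RHS
  have hrhs : ∑ p ∈ antidiagonal n,
      PowerSeries.coeff (R := A) p.1 (expPS f) * PowerSeries.coeff (R := A) p.2 (expPS g)
      = ∑ k ∈ range (n+1), ∑ l ∈ range (n+1),
          ((k.factorial : ℚ)⁻¹ * (l.factorial : ℚ)⁻¹) •
            PowerSeries.coeff (R := A) n (f ^ k * g ^ l) := by
    have step1 : ∀ p ∈ antidiagonal n,
        PowerSeries.coeff (R := A) p.1 (expPS f) * PowerSeries.coeff (R := A) p.2 (expPS g)
        = ∑ k ∈ range (n+1), ∑ l ∈ range (n+1),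
            ((k.factorial : ℚ)⁻¹ * (l.factorial : ℚ)⁻¹) •
              (PowerSeries.coeff (R := A) p.1 (f ^ k) * PowerSeries.coeff (R := A) p.2 (g ^ l)) := by
      intro p hp
      rw [Finset.HasAntidiagonal.mem_antidiagonal] at hp
      have hp1 : p.1 ≤ n := by omega
      have hp2 : p.2 ≤ n := by omega
      have e1 : PowerSeries.coeff (R := A) p.1 (expPS f)
          = ∑ k ∈ range (n+1), (k.factorial : ℚ)⁻¹ • PowerSeries.coeff (R := A) p.1 (f ^ k) := by
        rw [expPS, PowerSeries.coeff_mk]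
        refine Finset.sum_subset (by
          intro x hx; rw [Finset.mem_range] at *; omega) ?_
        intro k _ hk
        rw [Finset.mem_range, Nat.lt_succ_iff, not_le] at hk
        rw [coeff_pow_eq_zero' hf hk, smul_zero]
      have e2 : PowerSeries.coeff (R := A) p.2 (expPS g)
          = ∑ l ∈ range (n+1), (l.factorial : ℚ)⁻¹ • PowerSeries.coeff (R := A) p.2 (g ^ l) := by
        rw [expPS, PowerSeries.coeff_mk]
        refine Finset.sum_subset (by
          intro x hx; rw [Finset.mem_range] at *; omega) ?_
        intro l _ hl
        rw [Finset.mem_range, Nat.lt_succ_iff, not_le] at hl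
        rw [coeff_pow_eq_zero' hg hl, smul_zero]
      rw [e1, e2, Finset.sum_mul_sum]
      refine Finset.sum_congr rfl fun k _ => Finset.sum_congr rfl fun l _ => ?_
      rw [smul_mul_smul_comm]
    rw [Finset.sum_congr rfl step1, Finset.sum_comm]
    refine Finset.sum_congr rfl fun k _ => ?_
    rw [Finset.sum_comm]
    refine Finset.sum_congr rfl fun l _ => ?_
    rw [← Finset.smul_sum, PowerSeries.coeff_mul]
  rw [hrhs]
  -- LHS
  rw [expPS, PowerSeries.coeff_mk]
  have hlhs : ∀ m ∈ range (n+1),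
      (m.factorial : ℚ)⁻¹ • PowerSeries.coeff (R := A) n ((f + g) ^ m)
      = ∑ p ∈ antidiagonal m,
          ((p.1.factorial : ℚ)⁻¹ * (p.2.factorial : ℚ)⁻¹) •
            PowerSeries.coeff (R := A) n (f ^ p.1 * g ^ p.2) := by
    intro m _
    rw [add_pow, map_sum, Finset.smul_sum,
      Finset.Nat.sum_antidiagonal_eq_sum_range_succ_mk]
    refine Finset.sum_congr rfl fun j hj => ?_
    rw [Finset.mem_range, Nat.lt_succ_iff] at hj
    have hc : PowerSeries.coeff (R := A) n (f ^ j * g ^ (m - j) * (m.choose j : PowerSeries A))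
        = ((m.choose j : ℚ)) • PowerSeries.coeff (R := A) n (f ^ j * g ^ (m - j)) := by
      rw [show ((m.choose j : PowerSeries A)) = PowerSeries.C (R := A) ((m.choose j : A)) from
        (map_natCast (PowerSeries.C (R := A)) _).symm, PowerSeries.coeff_mul_C]
      rw [show (PowerSeries.coeff (R := A) n) (f ^ j * g ^ (m - j)) * (m.choose j : A)
        = (m.choose j : ℕ) • ((PowerSeries.coeff (R := A) n) (f ^ j * g ^ (m - j))) from
        by rw [nsmul_eq_mul, mul_comm]]
      rw [← Nat.cast_smul_eq_nsmul ℚ]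
    rw [hc, smul_smul]
    congr 1
    have h1 : (j.factorial : ℚ) ≠ 0 := by positivity
    have h2 : ((m - j).factorial : ℚ) ≠ 0 := by positivity
    have h3 : (m.factorial : ℚ) ≠ 0 := by positivity
    rw [Nat.cast_choose ℚ hj]
    field_simp
  rw [Finset.sum_congr rfl hlhs]
  exact triangle_sq n
    (fun k l => ((k.factorial : ℚ)⁻¹ * (l.factorial : ℚ)⁻¹) •
      PowerSeries.coeff (R := A) n (f ^ k * g ^ l))
    (fun k l h => by rw [coeff_mul_pow_eq_zero hf hg h, smul_zero])

end Aux

section Aux2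

noncomputable def cHalf : Polynomial ℚ := Polynomial.C (2:ℚ)⁻¹ * Polynomial.X

noncomputable def fPlus : PowerSeries (Polynomial ℚ) :=
  PowerSeries.C (R := Polynomial ℚ) cHalf * PowerSeries.map (Polynomial.C.comp (RingHom.id ℚ)) Eexp

noncomputable def gMinus : PowerSeries (Polynomial ℚ) :=
  PowerSeries.C (R := Polynomial ℚ) (-cHalf) *
    PowerSeries.map (Polynomial.C.comp (RingHom.id ℚ)) (rescale (-1) Eexp)

lemma coeff_fPlus (n : ℕ) : PowerSeries.coeff n fPlus
    = cHalf * Polynomial.C (if n = 0 then 0 else (n.factorial : ℚ)⁻¹) := by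
  simp [fPlus, PowerSeries.coeff_C_mul, PowerSeries.coeff_map, Eexp, apply_ite Polynomial.C]

lemma coeff_gMinus (n : ℕ) : PowerSeries.coeff n gMinus
    = -cHalf * Polynomial.C ((-1)^n * (if n = 0 then 0 else (n.factorial : ℚ)⁻¹)) := by
  simp [gMinus, PowerSeries.coeff_C_mul, PowerSeries.coeff_map, coeff_rescale, Eexp,
    apply_ite Polynomial.C, mul_comm]
  split_ifs <;> simp

lemma xSinh_eq : xSinh = gMinus + fPlus := by
  ext n
  rw [map_add, coeff_fPlus, coeff_gMinus]
  rw [xSinh, PowerSeries.coeff_C_mul, PowerSeries.coeff_mk]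
  rcases Nat.even_or_odd n with he | ho
  · rw [if_neg (by simpa using he), he.neg_one_pow]
    ring
  · have hn : n ≠ 0 := by rintro rfl; simp [Nat.odd_iff] at ho
    rw [if_pos ho, ho.neg_one_pow, if_neg hn]
    rw [cHalf]
    rw [show ((-1 : ℚ) * (n.factorial : ℚ)⁻¹) = -(n.factorial : ℚ)⁻¹ by ring, map_neg]
    have h2 : (Polynomial.C (2:ℚ)⁻¹) * (Polynomial.C (2:ℚ)) = 1 := by
      rw [← map_mul]; norm_num
    have : Polynomial.X * Polynomial.C ((n.factorial : ℚ)⁻¹)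
        = Polynomial.C (2:ℚ)⁻¹ * Polynomial.C (2:ℚ) * Polynomial.X
          * Polynomial.C ((n.factorial : ℚ)⁻¹) := by rw [h2, one_mul]
    rw [this, map_ofNat]  -- maybe not needed
    ring

lemma touchard_comp (n : ℕ) (q : Polynomial ℚ) :
    (touchard n).comp q = ∑ k ∈ range (n+1), Polynomial.C (stirlingSecond n k) * q ^ k := by
  simp [touchard, Polynomial.eval₂_finset_sum, Polynomial.comp]

lemma coeff_expPS_fPlus (n : ℕ) :
    PowerSeries.coeff n (expPS fPlus)
      = Polynomial.C ((n.factorial : ℚ))⁻¹ * (touchard n).comp cHalf := by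
  have hnf : ((n.factorial : ℚ)) ≠ 0 := by positivity
  rw [touchard_comp, Finset.mul_sum, expPS, PowerSeries.coeff_mk]
  refine Finset.sum_congr rfl fun k _ => ?_
  have hkf : ((k.factorial : ℚ)) ≠ 0 := by positivity
  have hpow : fPlus ^ k = PowerSeries.C (cHalf ^ k) *
      PowerSeries.map (Polynomial.C.comp (RingHom.id ℚ)) (Eexp ^ k) := by
    rw [fPlus, mul_pow, ← map_pow, ← map_pow]
  rw [hpow, PowerSeries.coeff_C_mul, PowerSeries.coeff_map, coeff_Eexp_pow,
    Polynomial.smul_eq_C_mul]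
  simp only [RingHom.comp_apply, RingHom.id_apply]
  have hq : (k.factorial : ℚ)⁻¹ * (stirlingSecond n k * k.factorial / n.factorial)
      = (n.factorial : ℚ)⁻¹ * stirlingSecond n k := by field_simp
  calc Polynomial.C ((k.factorial:ℚ))⁻¹
        * (cHalf ^ k * Polynomial.C (stirlingSecond n k * k.factorial / n.factorial))
      = Polynomial.C ((k.factorial : ℚ)⁻¹ * (stirlingSecond n k * k.factorial / n.factorial))
        * cHalf ^ k := by
        conv_rhs => rw [map_mul]
        ring
    _ = Polynomial.C ((n.factorial : ℚ)⁻¹ * stirlingSecond n k) * cHalf ^ k := by rw [hq]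
    _ = Polynomial.C ((n.factorial:ℚ))⁻¹ * (Polynomial.C (stirlingSecond n k) * cHalf ^ k) := by
        conv_lhs => rw [map_mul]
        ring

lemma coeff_expPS_gMinus (n : ℕ) :
    PowerSeries.coeff n (expPS gMinus)
      = Polynomial.C ((-1)^n * ((n.factorial : ℚ))⁻¹) * (touchard n).comp (-cHalf) := by
  have hnf : ((n.factorial : ℚ)) ≠ 0 := by positivity
  rw [touchard_comp, Finset.mul_sum, expPS, PowerSeries.coeff_mk]
  refine Finset.sum_congr rfl fun k _ => ?_
  have hkf : ((k.factorial : ℚ)) ≠ 0 := by positivity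
  have hpow : gMinus ^ k = PowerSeries.C ((-cHalf) ^ k) *
      PowerSeries.map (Polynomial.C.comp (RingHom.id ℚ)) (rescale (-1) (Eexp ^ k)) := by
    rw [gMinus, mul_pow, ← map_pow, ← map_pow, ← map_pow]
  rw [hpow, PowerSeries.coeff_C_mul, PowerSeries.coeff_map, coeff_rescale, coeff_Eexp_pow,
    Polynomial.smul_eq_C_mul]
  simp only [RingHom.comp_apply, RingHom.id_apply]
  have hq : (k.factorial : ℚ)⁻¹ * ((-1:ℚ)^n * (stirlingSecond n k * k.factorial / n.factorial))
      = (-1:ℚ)^n * (n.factorial : ℚ)⁻¹ * stirlingSecond n k := by field_simp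
  calc Polynomial.C ((k.factorial:ℚ))⁻¹
        * ((-cHalf) ^ k
          * Polynomial.C ((-1:ℚ)^n * (stirlingSecond n k * k.factorial / n.factorial)))
      = Polynomial.C ((k.factorial : ℚ)⁻¹
          * ((-1:ℚ)^n * (stirlingSecond n k * k.factorial / n.factorial)))
        * (-cHalf) ^ k := by
        conv_rhs => rw [map_mul]
        ring
    _ = Polynomial.C ((-1:ℚ)^n * (n.factorial : ℚ)⁻¹ * stirlingSecond n k)
        * (-cHalf) ^ k := by rw [hq]
    _ = Polynomial.C ((-1:ℚ)^n * (n.factorial:ℚ)⁻¹)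
        * (Polynomial.C (stirlingSecond n k) * (-cHalf) ^ k) := by
        conv_lhs => rw [show ((-1:ℚ)^n * (n.factorial : ℚ)⁻¹ * stirlingSecond n k)
          = ((-1:ℚ)^n * (n.factorial : ℚ)⁻¹) * stirlingSecond n k by ring, map_mul]
        ring

lemma constantCoeff_fPlus : constantCoeff fPlus = 0 := by
  rw [← coeff_zero_eq_constantCoeff_apply, coeff_fPlus]; simp

lemma constantCoeff_gMinus : constantCoeff gMinus = 0 := by
  rw [← coeff_zero_eq_constantCoeff_apply, coeff_gMinus]; simp

end Aux2

/-- `p_n(x) = Σ_{j=0}^n C(n,j) (-1)^j T_{n-j}(x/2) T_j(-x/2)`. -/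
theorem arcsinhP_touchard (n : ℕ) :
    arcsinhP n = ∑ j ∈ Finset.range (n + 1),
      Polynomial.C ((n.choose j : ℚ) * (-1) ^ j) *
        (touchard (n - j)).comp (Polynomial.C ((2 : ℚ)⁻¹) * Polynomial.X) *
        (touchard j).comp (-(Polynomial.C ((2 : ℚ)⁻¹) * Polynomial.X)) := by
  have hx : xSinh = gMinus + fPlus := xSinh_eq
  rw [arcsinhP, hx, expPS_add constantCoeff_gMinus constantCoeff_fPlus,
    PowerSeries.coeff_mul, Finset.Nat.sum_antidiagonal_eq_sum_range_succ_mk,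
    Finset.smul_sum]
  refine Finset.sum_congr rfl fun j hj => ?_
  rw [Finset.mem_range, Nat.lt_succ_iff] at hj
  have h1 : ((j.factorial : ℚ)) ≠ 0 := by positivity
  have h2 : (((n - j).factorial : ℚ)) ≠ 0 := by positivity
  have hch : ((n.choose j : ℚ)) * (-1:ℚ)^j
      = (n.factorial : ℚ) * ((-1:ℚ)^j * (j.factorial : ℚ)⁻¹) * (((n-j).factorial : ℚ))⁻¹ := by
    rw [Nat.cast_choose ℚ hj]
    field_simp
  rw [coeff_expPS_gMinus, coeff_expPS_fPlus, Polynomial.smul_eq_C_mul, hch, cHalf]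
  simp only [map_mul]
  ring
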